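/- Let Σ be a finite alphabet and p : Σ → Σ* a word substitution. If p is com-injective, then the Σ×Σ matrix M over ℚ whose entry M(a,b) is the number of occurrences of the letter a in the word p(b) has nonzero determinant (equivalently, M is invertible over ℚ). -/

import Mathlib

/-- for a com-injective substitution p over a finite alphabet `A`,
the letter-count matrix M(a,b) = (number of occurrences of a in p(b)) has
nonzero determinant over ℚ. -/
theorem stmt_6 {A : Type*} [Fintype A] [DecidableEq A] (p : A → List A)
    (hp : Function.Injective (fun m : Multiset A => m.bind fun a => (↑(p a) : Multiset A))) :
    (Matrix.of fun a b : A => ((p b).count a : ℚ)).det ≠ 0 := by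
  intro hdet
  rw [← Matrix.exists_mulVec_eq_zero_iff] at hdet
  obtain ⟨v, hv, hMv⟩ := hdet
  obtain ⟨b, hb⟩ := IsLocalization.exist_integer_multiples_of_finite
    (nonZeroDivisors ℤ) (S := ℚ) v
  choose w hw using hb
  have hb0 : (b : ℤ) ≠ 0 := nonZeroDivisors.coe_ne_zero b
  have hw0 : w ≠ 0 := by
    intro h
    apply hv
    funext a
    have h1 := hw a
    rw [h] at h1
    simp only [Pi.zero_apply, map_zero, zsmul_eq_mul] at h1
    rcases mul_eq_zero.mp h1.symm with h2 | h2
    · exact absurd h2 (by exact_mod_cast hb0)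
    · exact h2
  have key : ∀ a : A, (∑ c : A, ((p c).count a : ℤ) * w c) = 0 := by
    intro a
    have h1 : (Matrix.of fun a b : A => ((p b).count a : ℚ)).mulVec
        (fun c => ((w c : ℚ))) a = 0 := by
      have e1 : (fun c => ((w c : ℚ))) = (b : ℤ) • v := by
        funext c; rw [Pi.smul_apply, ← hw c]; simp [Algebra.smul_def]
      rw [e1, Matrix.mulVec_smul, hMv]
      simp
    simp only [Matrix.mulVec, Matrix.of_apply, dotProduct] at h1
    exact_mod_cast h1
  set mp : Multiset A := ∑ a : A, (w a).toNat • ({a} : Multiset A) with hmp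
  set mn : Multiset A := ∑ a : A, (-(w a)).toNat • ({a} : Multiset A) with hmn
  have hcount : ∀ (u : A → ℤ) (x : A),
      (∑ a : A, (u a).toNat • ({a} : Multiset A)).count x = (u x).toNat := by
    intro u x
    rw [Multiset.count_sum']
    simp [Multiset.count_nsmul, Multiset.count_singleton]
  have nsmul_bind : ∀ (n : ℕ) (a : A),
      ((n • ({a} : Multiset A)).bind fun c => (↑(p c) : Multiset A))
        = n • (↑(p a) : Multiset A) := by
    intro n a
    induction n with
    | zero => simp
    | succ k ih => rw [succ_nsmul, succ_nsmul, Multiset.add_bind, ih, Multiset.singleton_bind]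
  have gen : ∀ (s : Finset A) (u : A → ℕ),
      ((∑ a ∈ s, u a • ({a} : Multiset A)).bind fun c => (↑(p c) : Multiset A))
        = ∑ a ∈ s, u a • (↑(p a) : Multiset A) := by
    intro s u
    induction s using Finset.induction with
    | empty => simp
    | @insert _ _ h ih =>
      rw [Finset.sum_insert h, Finset.sum_insert h, Multiset.add_bind, ih, nsmul_bind]
  have hbind : mp.bind (fun a => (↑(p a) : Multiset A))
      = mn.bind (fun a => (↑(p a) : Multiset A)) := by
    rw [hmp, hmn, gen, gen]
    ext x
    rw [Multiset.count_sum', Multiset.count_sum']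
    simp only [Multiset.count_nsmul]
    have h2 : ∀ c : A, (w c : ℤ) = ((w c).toNat : ℤ) - (((-(w c)).toNat : ℤ)) := by
      intro c; omega
    have h3 : (∑ c : A, ((p c).count x : ℤ) * ((w c).toNat : ℤ))
        = ∑ c : A, ((p c).count x : ℤ) * (((-(w c)).toNat : ℤ)) := by
      rw [← sub_eq_zero, ← Finset.sum_sub_distrib]
      rw [Finset.sum_congr rfl (fun c _ => by rw [← mul_sub, ← h2 c])]
      exact key x
    have h4 : ((∑ c : A, (w c).toNat * Multiset.count x (↑(p c) : Multiset A) : ℕ) : ℤ)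
        = ((∑ c : A, (-(w c)).toNat * Multiset.count x (↑(p c) : Multiset A) : ℕ) : ℤ) := by
      push_cast
      simp only [Multiset.coe_count]
      rw [Finset.sum_congr rfl (fun c _ => mul_comm ((w c).toNat : ℤ) _),
          Finset.sum_congr rfl (fun c _ => mul_comm (((-(w c)).toNat : ℤ)) _)]
      exact h3
    exact_mod_cast h4
  have heq := hp hbind
  apply hw0
  funext a
  have h4 := congrArg (Multiset.count a) heq
  rw [hmp, hmn, hcount, hcount] at h4
  show w a = 0
  omega
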